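/- arXiv:1201.0408 — 3 statements merged into one kernel-verified Lean document; each statement's English description precedes it below -/
import Mathlib

section
/- Let $n \geq 2$, $1 < p < 2$, let $\omega$ be a nondecreasing continuous function on $[0,\infty)$ with $\omega(0) = 0$ and $\omega(\delta) > 0$ for $\delta > 0$, and let $\chi^{-1}$ be the inverse of $\chi(\delta) = \delta\omega(\delta)$. Then $\int_1^\infty \lambda^{n-1-p} (\chi^{-1}(1/\lambda))^{(n-1)p} d\lambda < \infty$ if and only if $\int_0^1 \delta^{n(p-1)-1} / (\omega(\delta))^{n-p} \, d\delta < \infty$. -/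
open MeasureTheory Real Set ENNReal

lemma aux_lint_rpow1 {b x : ℝ} (hb : 0 < b) (hx : 0 ≤ x) :
    ∫⁻ t in Set.Ioo 0 x, ENNReal.ofReal (b * t ^ (b - 1)) = ENNReal.ofReal (x ^ b) := by
  have hint : IntegrableOn (fun t : ℝ => b * t ^ (b - 1)) (Set.Ioo 0 x) := by
    have := (intervalIntegral.intervalIntegrable_rpow' (a := 0) (b := x) (r := b - 1)
      (by linarith)).const_mul b
    have h2 := (intervalIntegrable_iff_integrableOn_Ioo_of_le hx).mp this
    exact h2
  rw [← ofReal_integral_eq_lintegral_ofReal hint]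
  · congr 1
    rw [← integral_Ioc_eq_integral_Ioo, ← intervalIntegral.integral_of_le hx,
      intervalIntegral.integral_const_mul, integral_rpow (Or.inl (by linarith))]
    rw [Real.zero_rpow (by linarith : b - 1 + 1 ≠ 0)]
    have : b - 1 + 1 = b := by ring
    rw [this]
    field_simp
    simp
  · filter_upwards [ae_restrict_mem measurableSet_Ioo] with t ht
    exact mul_nonneg hb.le (Real.rpow_nonneg ht.1.le _)

lemma aux_lint_rpow2 {a M : ℝ} (ha : -1 < a) (hM : 1 ≤ M) :
    ∫⁻ l in Set.Ico 1 M, ENNReal.ofReal (l ^ a) =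
      ENNReal.ofReal ((M ^ (a + 1) - 1) / (a + 1)) := by
  rw [Measure.restrict_congr_set Ico_ae_eq_Ioc]
  have hint : IntegrableOn (fun l : ℝ => l ^ a) (Set.Ioc 1 M) := by
    have := intervalIntegral.intervalIntegrable_rpow' (a := 1) (b := M) (r := a) ha
    rw [intervalIntegrable_iff_integrableOn_Ioc_of_le hM] at this
    exact this
  rw [← ofReal_integral_eq_lintegral_ofReal hint]
  · congr 1
    rw [← intervalIntegral.integral_of_le hM, integral_rpow (Or.inl ha), Real.one_rpow]
  · filter_upwards [ae_restrict_mem measurableSet_Ioc] with t ht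
    exact Real.rpow_nonneg (by linarith [ht.1]) _

/-- finiteness transfer: integrals of `f` over `Ioo 0 s` and `Ioo 0 u` (with `0 < s ≤ u`)
are simultaneously finite provided `f` is bounded on `Icc s u`. -/
lemma aux_transfer {f : ℝ → ℝ≥0∞} {s u : ℝ} (hs : 0 < s) (hsu : s ≤ u) {C : ℝ≥0∞}
    (hC : C ≠ ⊤) (hbd : ∀ t ∈ Set.Icc s u, f t ≤ C) :
    (∫⁻ t in Set.Ioo 0 u, f t) < ⊤ ↔ (∫⁻ t in Set.Ioo 0 s, f t) < ⊤ := by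
  constructor
  · intro h
    exact lt_of_le_of_lt (lintegral_mono_set (Ioo_subset_Ioo le_rfl hsu)) h
  · intro h
    have hsub : Set.Ioo 0 u ⊆ Set.Ioo 0 s ∪ Set.Icc s u := by
      intro t ht
      rcases lt_or_ge t s with h' | h'
      · exact Or.inl ⟨ht.1, h'⟩
      · exact Or.inr ⟨h', ht.2.le⟩
    have h1 : (∫⁻ t in Set.Ioo 0 u, f t) ≤
        (∫⁻ t in Set.Ioo 0 s, f t) + ∫⁻ t in Set.Icc s u, f t :=
      le_trans (lintegral_mono_set hsub) (lintegral_union_le _ _ _)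
    have h2 : (∫⁻ t in Set.Icc s u, f t) ≤ C * volume (Set.Icc s u) := by
      calc (∫⁻ t in Set.Icc s u, f t) ≤ ∫⁻ _ in Set.Icc s u, C := by
            refine lintegral_mono_ae ?_
            filter_upwards [ae_restrict_mem measurableSet_Icc] with t ht
            exact hbd t ht
        _ = C * volume (Set.Icc s u) := setLIntegral_const _ _
    have h3 : C * volume (Set.Icc s u) < ⊤ :=
      ENNReal.mul_lt_top hC.lt_top (by simp [Real.volume_Icc])
    exact lt_of_le_of_lt h1 (ENNReal.add_lt_top.mpr ⟨h, lt_of_le_of_lt h2 h3⟩)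

/-- Lemma 2: for `n ≥ 2`, `1 < p < 2`, a modulus of continuity `ω` and the
inverse `ψ = χ⁻¹` of `χ(δ) = δω(δ)`, the convergence of
`∫_1^∞ λ^{n-1-p} (χ⁻¹(1/λ))^{(n-1)p} dλ` is equivalent to that of
`∫_0^1 δ^{n(p-1)-1}/ω(δ)^{n-p} dδ`. -/
theorem lemma2_integral_equivalence (n : ℕ) (hn : 2 ≤ n) (p : ℝ) (hp1 : 1 < p) (hp2 : p < 2)
    (ω ψ : ℝ → ℝ) (hmono : MonotoneOn ω (Set.Ici 0)) (hcont : ContinuousOn ω (Set.Ici 0))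
    (hω0 : ω 0 = 0) (hωpos : ∀ δ : ℝ, 0 < δ → 0 < ω δ)
    (hψ₁ : ∀ δ : ℝ, 0 ≤ δ → ψ (δ * ω δ) = δ)
    (hψ₂ : ∀ y : ℝ, 0 ≤ y → 0 ≤ ψ y ∧ ψ y * ω (ψ y) = y) :
    (∫⁻ l in Set.Ici (1:ℝ),
        ENNReal.ofReal (l ^ ((n:ℝ) - 1 - p) * ψ (1/l) ^ (((n:ℝ) - 1) * p))) < ⊤ ↔
      (∫⁻ δ in Set.Ioc (0:ℝ) 1,
        ENNReal.ofReal (δ ^ ((n:ℝ) * (p - 1) - 1) / ω δ ^ ((n:ℝ) - p))) < ⊤ := by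
  have hn2 : (2:ℝ) ≤ (n:ℝ) := by exact_mod_cast hn
  set a : ℝ := (n:ℝ) - 1 - p with ha_def
  set b : ℝ := ((n:ℝ) - 1) * p with hb_def
  set e : ℝ := (n:ℝ) - p with he_def
  set c : ℝ := (n:ℝ) * (p - 1) - 1 with hc_def
  have he : 0 < e := by simp only [he_def]; linarith
  have hb1 : 1 < b := by nlinarith
  have hb0 : 0 < b := by linarith
  have ha1 : a + 1 = e := by simp only [ha_def, he_def]; ring
  have ha : -1 < a := by linarith
  have hce : c = b - 1 - e := by simp only [hc_def, hb_def, he_def]; ring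
  -- extended ω, monotone on all of ℝ, agreeing with ω on Ici 0
  set ω' : ℝ → ℝ := fun t => ω (max t 0) with hω'_def
  have hω'mono : Monotone ω' := fun s t h =>
    hmono (Set.mem_Ici.mpr (le_max_right _ _)) (Set.mem_Ici.mpr (le_max_right _ _)) (max_le_max h le_rfl)
  have hω'eq : ∀ t : ℝ, 0 ≤ t → ω' t = ω t := fun t ht => by
    simp only [hω'_def, max_eq_left ht]
  have hω'meas : Measurable ω' := hω'mono.measurable
  -- χ is monotone
  have hχmono : ∀ s t : ℝ, 0 ≤ s → s ≤ t → s * ω s ≤ t * ω t := by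
    intro s t hs hst
    have h1 : ω s ≤ ω t := hmono hs (le_trans hs hst) hst
    have h2 : 0 ≤ ω s := by rw [← hω0]; exact hmono (Set.mem_Ici.mpr le_rfl) hs hs
    nlinarith
  -- the key inversion inequality
  have hkey : ∀ t y : ℝ, 0 ≤ t → 0 ≤ y → (t < ψ y ↔ t * ω t < y) := by
    intro t y ht hy
    obtain ⟨hψy0, hψy⟩ := hψ₂ y hy
    constructor
    · intro h
      have hψypos : 0 < ψ y := lt_of_le_of_lt ht h
      have h1 : ω t ≤ ω (ψ y) := hmono ht hψy0 h.le
      have h2 : 0 < ω (ψ y) := hωpos _ hψypos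
      nlinarith
    · intro h
      by_contra hcon
      push_neg at hcon
      have := hχmono (ψ y) t hψy0 hcon
      rw [hψy] at this
      linarith
  have hψ1 : 0 < ψ 1 := by
    obtain ⟨h0, h1⟩ := hψ₂ 1 zero_le_one
    rcases h0.lt_or_eq with h | h
    · exact h
    · exfalso; rw [← h] at h1; simp at h1
  -- the double-integral function
  set F : ℝ → ℝ → ℝ≥0∞ := fun l t =>
    if 1 ≤ l ∧ 0 < t ∧ l * (t * ω' t) < 1 then ENNReal.ofReal (l ^ a * (b * t ^ (b - 1)))
    else 0 with hF_def
  have hFmeas : Measurable (Function.uncurry F) := by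
    have hS : MeasurableSet {q : ℝ × ℝ | 1 ≤ q.1 ∧ 0 < q.2 ∧ q.1 * (q.2 * ω' q.2) < 1} := by
      have h1 : MeasurableSet {q : ℝ × ℝ | 1 ≤ q.1} :=
        measurableSet_le measurable_const measurable_fst
      have h2 : MeasurableSet {q : ℝ × ℝ | 0 < q.2} :=
        measurableSet_lt measurable_const measurable_snd
      have h3 : MeasurableSet {q : ℝ × ℝ | q.1 * (q.2 * ω' q.2) < 1} := by
        refine measurableSet_lt ?_ measurable_const
        exact measurable_fst.mul (measurable_snd.mul (hω'meas.comp measurable_snd))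
      exact h1.inter (h2.inter h3)
    have hg : Measurable fun q : ℝ × ℝ => ENNReal.ofReal (q.1 ^ a * (b * q.2 ^ (b - 1))) := by
      fun_prop
    exact Measurable.ite hS hg measurable_const
  -- Step A: the left integral as an iterated integral
  have stepA : (∫⁻ l in Set.Ici (1:ℝ),
      ENNReal.ofReal (l ^ a * ψ (1/l) ^ b)) = ∫⁻ l, ∫⁻ t, F l t := by
    have hinner : ∀ l : ℝ, (∫⁻ t, F l t) =
        (Set.Ici (1:ℝ)).indicator (fun l => ENNReal.ofReal (l ^ a * ψ (1/l) ^ b)) l := by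
      intro l
      by_cases hl : 1 ≤ l
      · have hl0 : 0 < l := lt_of_lt_of_le one_pos hl
        have hinv0 : 0 ≤ 1 / l := by positivity
        set x := ψ (1/l) with hx_def
        have hx0 : 0 ≤ x := (hψ₂ _ hinv0).1
        have hFeq : ∀ t : ℝ, F l t =
            (Set.Ioo 0 x).indicator (fun t => ENNReal.ofReal (l ^ a * (b * t ^ (b - 1)))) t := by
          intro t
          by_cases ht : t ∈ Set.Ioo 0 x
          · rw [Set.indicator_of_mem ht, hF_def]
            refine if_pos ⟨hl, ht.1, ?_⟩
            rw [hω'eq t ht.1.le]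
            have := (hkey t (1/l) ht.1.le hinv0).mp ht.2
            calc l * (t * ω t) < l * (1/l) := by
                  exact mul_lt_mul_of_pos_left this hl0
              _ = 1 := by field_simp
          · rw [Set.indicator_of_notMem ht, hF_def]
            refine if_neg ?_
            rintro ⟨-, ht0, hlt1⟩
            refine ht ⟨ht0, ?_⟩
            rw [hω'eq t ht0.le] at hlt1
            refine (hkey t (1/l) ht0.le hinv0).mpr ?_
            rw [lt_div_iff₀ hl0, mul_comm]
            exact hlt1
        rw [Set.indicator_of_mem (by exact hl : l ∈ Set.Ici 1)]
        calc (∫⁻ t, F l t)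
            = ∫⁻ t, (Set.Ioo 0 x).indicator
                (fun t => ENNReal.ofReal (l ^ a * (b * t ^ (b - 1)))) t := lintegral_congr hFeq
          _ = ∫⁻ t in Set.Ioo 0 x, ENNReal.ofReal (l ^ a * (b * t ^ (b - 1))) :=
              lintegral_indicator measurableSet_Ioo _
          _ = ∫⁻ t in Set.Ioo 0 x,
                ENNReal.ofReal (l ^ a) * ENNReal.ofReal (b * t ^ (b - 1)) := by
              refine lintegral_congr fun t => ?_
              rw [ENNReal.ofReal_mul (Real.rpow_nonneg hl0.le _)]
          _ = ENNReal.ofReal (l ^ a) * ∫⁻ t in Set.Ioo 0 x, ENNReal.ofReal (b * t ^ (b - 1)) :=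
              lintegral_const_mul' _ _ ENNReal.ofReal_ne_top
          _ = ENNReal.ofReal (l ^ a) * ENNReal.ofReal (x ^ b) := by rw [aux_lint_rpow1 hb0 hx0]
          _ = ENNReal.ofReal (l ^ a * x ^ b) :=
              (ENNReal.ofReal_mul (Real.rpow_nonneg hl0.le _)).symm
      · have hz : ∀ t, F l t = 0 := fun t => if_neg (by rintro ⟨h1, -, -⟩; exact hl h1)
        rw [Set.indicator_of_notMem (by exact hl), lintegral_congr hz, lintegral_zero]
    calc (∫⁻ l in Set.Ici (1:ℝ), ENNReal.ofReal (l ^ a * ψ (1/l) ^ b))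
        = ∫⁻ l, (Set.Ici (1:ℝ)).indicator
            (fun l => ENNReal.ofReal (l ^ a * ψ (1/l) ^ b)) l :=
          (lintegral_indicator measurableSet_Ici _).symm
      _ = ∫⁻ l, ∫⁻ t, F l t := lintegral_congr fun l => (hinner l).symm
  have hswap : (∫⁻ l, ∫⁻ t, F l t) = ∫⁻ t, ∫⁻ l, F l t :=
    lintegral_lintegral_swap hFmeas.aemeasurable
  -- Step B: compute the inner λ-integral
  set G : ℝ → ℝ≥0∞ := fun t =>
    ENNReal.ofReal ((b * t ^ (b - 1)) * (((1 / (t * ω t)) ^ e - 1) / e)) with hG_def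
  have stepB : ∀ t : ℝ, (∫⁻ l, F l t) = (Set.Ioo 0 (ψ 1)).indicator G t := by
    intro t
    by_cases ht : t ∈ Set.Ioo 0 (ψ 1)
    · obtain ⟨ht0, htψ⟩ := ht
      have hωt : 0 < ω t := hωpos t ht0
      have hχt : 0 < t * ω t := mul_pos ht0 hωt
      have hχt1 : t * ω t < 1 := (hkey t 1 ht0.le zero_le_one).mp htψ
      set M : ℝ := 1 / (t * ω t) with hM_def
      have hM : 1 ≤ M := le_of_lt ((one_lt_div hχt).mpr hχt1)
      have hFeq : ∀ l : ℝ, F l t =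
          (Set.Ico 1 M).indicator (fun l => ENNReal.ofReal (l ^ a * (b * t ^ (b - 1)))) l := by
        intro l
        by_cases hlmem : l ∈ Set.Ico 1 M
        · rw [Set.indicator_of_mem hlmem, hF_def]
          refine if_pos ⟨hlmem.1, ht0, ?_⟩
          rw [hω'eq t ht0.le]
          have := hlmem.2
          rw [hM_def, lt_div_iff₀ hχt] at this
          exact this
        · rw [Set.indicator_of_notMem hlmem, hF_def]
          refine if_neg ?_
          rintro ⟨hl1, -, hlt1⟩
          rw [hω'eq t ht0.le] at hlt1
          exact hlmem ⟨hl1, by rw [hM_def, lt_div_iff₀ hχt]; exact hlt1⟩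
      have htmem : t ∈ Set.Ioo 0 (ψ 1) := ⟨ht0, htψ⟩
      rw [Set.indicator_of_mem htmem]
      have hnn : 0 ≤ b * t ^ (b - 1) := mul_nonneg hb0.le (Real.rpow_nonneg ht0.le _)
      calc (∫⁻ l, F l t)
          = ∫⁻ l, (Set.Ico 1 M).indicator
              (fun l => ENNReal.ofReal (l ^ a * (b * t ^ (b - 1)))) l := lintegral_congr hFeq
        _ = ∫⁻ l in Set.Ico 1 M, ENNReal.ofReal (l ^ a * (b * t ^ (b - 1))) :=
            lintegral_indicator measurableSet_Ico _
        _ = ∫⁻ l in Set.Ico 1 M,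
              ENNReal.ofReal (l ^ a) * ENNReal.ofReal (b * t ^ (b - 1)) := by
            refine lintegral_congr fun l => ?_
            rw [ENNReal.ofReal_mul' hnn]
        _ = (∫⁻ l in Set.Ico 1 M, ENNReal.ofReal (l ^ a)) * ENNReal.ofReal (b * t ^ (b - 1)) :=
            lintegral_mul_const' _ _ ENNReal.ofReal_ne_top
        _ = ENNReal.ofReal ((M ^ (a + 1) - 1) / (a + 1)) * ENNReal.ofReal (b * t ^ (b - 1)) := by
            rw [aux_lint_rpow2 ha hM]
        _ = G t := by
            rw [hG_def, ha1, ← ENNReal.ofReal_mul' hnn, mul_comm]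
    · have htψ' : ¬ (0 < t ∧ t < ψ 1) := ht
      have hz : ∀ l, F l t = 0 := by
        intro l
        refine if_neg ?_
        rintro ⟨hl1, ht0, hlt1⟩
        rw [hω'eq t ht0.le] at hlt1
        have h1 : ¬ t < ψ 1 := fun h => htψ' ⟨ht0, h⟩
        have h2 : 1 ≤ t * ω t := not_lt.mp fun h => h1 ((hkey t 1 ht0.le zero_le_one).mpr h)
        nlinarith
      rw [Set.indicator_of_notMem ht, lintegral_congr hz, lintegral_zero]
  have hI : (∫⁻ l in Set.Ici (1:ℝ), ENNReal.ofReal (l ^ a * ψ (1/l) ^ b))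
      = ∫⁻ t in Set.Ioo 0 (ψ 1), G t := by
    rw [stepA, hswap, lintegral_congr stepB, lintegral_indicator measurableSet_Ioo]
  -- the correction term
  set fC : ℝ → ℝ≥0∞ := fun t => ENNReal.ofReal ((b * t ^ (b - 1)) / e) with hfC_def
  have hfCmeas : Measurable fC := by fun_prop
  have hCfin : (∫⁻ t in Set.Ioo 0 (ψ 1), fC t) < ⊤ := by
    have hbd : ∀ᵐ t ∂(volume.restrict (Set.Ioo 0 (ψ 1))),
        fC t ≤ ENNReal.ofReal ((b * (ψ 1) ^ (b - 1)) / e) := by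
      filter_upwards [ae_restrict_mem measurableSet_Ioo] with t ht
      refine ENNReal.ofReal_le_ofReal ?_
      have h1 : t ^ (b - 1) ≤ (ψ 1) ^ (b - 1) :=
        Real.rpow_le_rpow ht.1.le ht.2.le (by linarith)
      have h2 : b * t ^ (b - 1) ≤ b * (ψ 1) ^ (b - 1) :=
        mul_le_mul_of_nonneg_left h1 hb0.le
      exact div_le_div₀ (mul_nonneg hb0.le (Real.rpow_nonneg (hψ₂ 1 zero_le_one).1 _)) h2 he le_rfl
    calc (∫⁻ t in Set.Ioo 0 (ψ 1), fC t)
        ≤ ∫⁻ _ in Set.Ioo 0 (ψ 1), ENNReal.ofReal ((b * (ψ 1) ^ (b - 1)) / e) :=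
          lintegral_mono_ae hbd
      _ = ENNReal.ofReal ((b * (ψ 1) ^ (b - 1)) / e) * volume (Set.Ioo 0 (ψ 1)) :=
          setLIntegral_const _ _
      _ < ⊤ := ENNReal.mul_lt_top ENNReal.ofReal_lt_top (by simp [Real.volume_Ioo])
  -- pointwise identity on Ioo 0 (ψ 1)
  have hpt : ∀ t ∈ Set.Ioo 0 (ψ 1), G t + fC t
      = ENNReal.ofReal (b / e) * ENNReal.ofReal (t ^ c / ω t ^ e) := by
    intro t ht
    obtain ⟨ht0, htψ⟩ := ht
    have hωt : 0 < ω t := hωpos t ht0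
    have hχt : 0 < t * ω t := mul_pos ht0 hωt
    have hχt1 : t * ω t < 1 := (hkey t 1 ht0.le zero_le_one).mp htψ
    have hM1 : 1 ≤ 1 / (t * ω t) := le_of_lt ((one_lt_div hχt).mpr hχt1)
    have hMe : 1 ≤ (1 / (t * ω t)) ^ e := Real.one_le_rpow hM1 he.le
    have htb : 0 ≤ t ^ (b - 1) := Real.rpow_nonneg ht0.le _
    have hnn1 : 0 ≤ (b * t ^ (b - 1)) * (((1 / (t * ω t)) ^ e - 1) / e) :=
      mul_nonneg (mul_nonneg hb0.le htb) (div_nonneg (by linarith) he.le)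
    have hnn2 : 0 ≤ (b * t ^ (b - 1)) / e := div_nonneg (mul_nonneg hb0.le htb) he.le
    show ENNReal.ofReal ((b * t ^ (b - 1)) * (((1 / (t * ω t)) ^ e - 1) / e))
        + ENNReal.ofReal ((b * t ^ (b - 1)) / e) = _
    rw [← ENNReal.ofReal_add hnn1 hnn2,
      ← ENNReal.ofReal_mul (by positivity : (0:ℝ) ≤ b / e)]
    congr 1
    have h1 : (1 / (t * ω t)) ^ e = 1 / (t ^ e * ω t ^ e) := by
      rw [one_div, Real.inv_rpow hχt.le, Real.mul_rpow ht0.le hωt.le, one_div]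
    have h2 : t ^ (b - 1) = t ^ c * t ^ e := by
      rw [← Real.rpow_add ht0]; congr 1; rw [hce]; ring
    rw [h1, h2]
    have he' : e ≠ 0 := ne_of_gt he
    have hte : 0 < t ^ e := Real.rpow_pos_of_pos ht0 _
    have hωe : 0 < ω t ^ e := Real.rpow_pos_of_pos hωt _
    field_simp
    ring
  -- combine: I + C = (b/e) K
  have hsum : (∫⁻ t in Set.Ioo 0 (ψ 1), G t) + (∫⁻ t in Set.Ioo 0 (ψ 1), fC t)
      = ENNReal.ofReal (b / e)
        * ∫⁻ t in Set.Ioo 0 (ψ 1), ENNReal.ofReal (t ^ c / ω t ^ e) := by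
    rw [← lintegral_add_right' _ hfCmeas.aemeasurable,
      ← lintegral_const_mul' _ _ ENNReal.ofReal_ne_top]
    exact setLIntegral_congr_fun measurableSet_Ioo hpt
  have hbe0 : (0:ℝ) < b / e := by positivity
  have hiff1 : (∫⁻ t in Set.Ioo 0 (ψ 1), G t) < ⊤ ↔
      (∫⁻ t in Set.Ioo 0 (ψ 1), ENNReal.ofReal (t ^ c / ω t ^ e)) < ⊤ := by
    constructor
    · intro h
      have hfin : ENNReal.ofReal (b / e)
          * (∫⁻ t in Set.Ioo 0 (ψ 1), ENNReal.ofReal (t ^ c / ω t ^ e)) < ⊤ := by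
        rw [← hsum]; exact ENNReal.add_lt_top.mpr ⟨h, hCfin⟩
      by_contra hK
      push_neg at hK
      rw [top_le_iff.mp hK, ENNReal.mul_top (ENNReal.ofReal_pos.mpr hbe0).ne'] at hfin
      exact lt_irrefl _ hfin
    · intro h
      have hle : (∫⁻ t in Set.Ioo 0 (ψ 1), G t) ≤ ENNReal.ofReal (b / e)
          * (∫⁻ t in Set.Ioo 0 (ψ 1), ENNReal.ofReal (t ^ c / ω t ^ e)) := by
        rw [← hsum]; exact le_self_add
      exact lt_of_le_of_lt hle (ENNReal.mul_lt_top ENNReal.ofReal_lt_top h)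
  -- transfer between upper endpoints
  set s : ℝ := min (ψ 1) 1 with hs_def
  have hs0 : 0 < s := lt_min hψ1 one_pos
  have hbound : ∀ u : ℝ, s ≤ u → ∀ t ∈ Set.Icc s u,
      ENNReal.ofReal (t ^ c / ω t ^ e)
        ≤ ENNReal.ofReal (max (s ^ c) (u ^ c) / ω s ^ e) := by
    intro u hsu t ht
    obtain ⟨hts, htu⟩ := ht
    have ht0 : 0 < t := lt_of_lt_of_le hs0 hts
    have hωs : 0 < ω s := hωpos s hs0
    have hωse : 0 < ω s ^ e := Real.rpow_pos_of_pos hωs _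
    have hωte : ω s ^ e ≤ ω t ^ e :=
      Real.rpow_le_rpow hωs.le (hmono hs0.le ht0.le hts) he.le
    refine ENNReal.ofReal_le_ofReal ?_
    have hnum : t ^ c ≤ max (s ^ c) (u ^ c) := by
      rcases le_or_gt 0 c with hc | hc
      · exact le_max_of_le_right (Real.rpow_le_rpow ht0.le htu hc)
      · exact le_max_of_le_left (Real.rpow_le_rpow_of_nonpos hs0 hts hc.le)
    have hmax0 : 0 ≤ max (s ^ c) (u ^ c) :=
      le_trans (Real.rpow_nonneg hs0.le c) (le_max_left _ _)
    exact div_le_div₀ hmax0 hnum hωse hωte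
  have htrans : ∀ u : ℝ, s ≤ u →
      ((∫⁻ t in Set.Ioo 0 u, ENNReal.ofReal (t ^ c / ω t ^ e)) < ⊤ ↔
       (∫⁻ t in Set.Ioo 0 s, ENNReal.ofReal (t ^ c / ω t ^ e)) < ⊤) :=
    fun u hsu => aux_transfer hs0 hsu ENNReal.ofReal_ne_top (hbound u hsu)
  rw [hI, ← Measure.restrict_congr_set Ioo_ae_eq_Ioc, hiff1]
  exact (htrans (ψ 1) (min_le_left _ _)).trans (htrans 1 (min_le_right _ _)).symm
end

section
/- Let $\omega$ be a nondecreasing continuous function on $[0,\infty)$ with $\omega(0)=0$, positive for $\delta>0$, let $\chi(\delta) = \delta\omega(\delta)$ with inverse $\chi^{-1}$, and let $1 < p < 2$. Define $\Theta_p(y) = (\int_1^y (\chi^{-1}(1/\tau))^p d\tau)^{1/p}$ for $y > 1$. If $\int_0^1 \delta^{2p-3}/(\omega(\delta))^{2-p} d\delta < \infty$, then $\int_1^\infty \lambda^{-p} (\Theta_p(\lambda))^p d\lambda < \infty$. -/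
open MeasureTheory Real Set ENNReal

/-- if `∫_0^1 δ^{2p-3}/ω(δ)^{2-p} dδ < ∞` then
`∫_1^∞ λ^{-p} Θ_p(λ)^p dλ < ∞`, where `Θ_p(y) = (∫_1^y (χ⁻¹(1/τ))^p dτ)^{1/p}`
and `ψ = χ⁻¹` is the inverse of `χ(δ) = δω(δ)`. -/
theorem theta_integral_finite (p : ℝ) (hp1 : 1 < p) (hp2 : p < 2)
    (ω ψ : ℝ → ℝ) (hmono : MonotoneOn ω (Set.Ici 0)) (hcont : ContinuousOn ω (Set.Ici 0))
    (hω0 : ω 0 = 0) (hωpos : ∀ δ : ℝ, 0 < δ → 0 < ω δ)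
    (hψ₁ : ∀ δ : ℝ, 0 ≤ δ → ψ (δ * ω δ) = δ)
    (hψ₂ : ∀ y : ℝ, 0 ≤ y → 0 ≤ ψ y ∧ ψ y * ω (ψ y) = y)
    (Θ : ℝ → ℝ) (hΘ : ∀ y : ℝ, Θ y = (∫ τ in (1:ℝ)..y, ψ (1/τ) ^ p) ^ (1/p))
    (hint : (∫⁻ δ in Set.Ioc (0:ℝ) 1,
      ENNReal.ofReal (δ ^ (2 * p - 3) / ω δ ^ (2 - p))) < ⊤) :
    (∫⁻ l in Set.Ici (1:ℝ), ENNReal.ofReal (Θ l ^ p / l ^ p)) < ⊤ := by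
  have hp0 : (0:ℝ) < p := by linarith
  have hpne : p ≠ 0 := ne_of_gt hp0
  have h2p : (0:ℝ) < 2 - p := by linarith
  have h2k : ∀ k : ℕ, (0:ℝ) < 2 ^ k := fun k => pow_pos two_pos k
  -- χ monotone
  have hχ : ∀ a b : ℝ, 0 ≤ a → a ≤ b → a * ω a ≤ b * ω b := by
    intro a b ha hab
    have hb : (0:ℝ) ≤ b := ha.trans hab
    have h1 : ω a ≤ ω b := hmono (mem_Ici.2 ha) (mem_Ici.2 hb) hab
    have h2 : (0:ℝ) ≤ ω b := by
      rcases eq_or_lt_of_le hb with h | h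
      · rw [← h, hω0]
      · exact (hωpos b h).le
    nlinarith
  -- ψ monotone
  have hψmono : ∀ a b : ℝ, 0 ≤ a → a ≤ b → ψ a ≤ ψ b := by
    intro a b ha hab
    by_contra hcon
    push_neg at hcon
    have hψa := hψ₂ a ha
    have hψb := hψ₂ b (ha.trans hab)
    have hψapos : 0 < ψ a := hψb.1.trans_lt hcon
    have h2 : ψ b * ω (ψ b) ≤ ψ b * ω (ψ a) :=
      mul_le_mul_of_nonneg_left
        (hmono (mem_Ici.2 hψb.1) (mem_Ici.2 hψapos.le) hcon.le) hψb.1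
    have h3 : ψ b * ω (ψ a) < ψ a * ω (ψ a) :=
      mul_lt_mul_of_pos_right hcon (hωpos _ hψapos)
    rw [hψa.2] at h3
    rw [hψb.2] at h2
    linarith
  -- the dyadic sequence
  set d : ℕ → ℝ := fun k => ψ (((2:ℝ) ^ k)⁻¹) with hd_def
  have hinvnn : ∀ k : ℕ, (0:ℝ) ≤ ((2:ℝ) ^ k)⁻¹ := fun k => (inv_pos.2 (h2k k)).le
  have hd0 : ∀ k, 0 ≤ d k := fun k => (hψ₂ _ (hinvnn k)).1
  have hχd : ∀ k, d k * ω (d k) = ((2:ℝ) ^ k)⁻¹ := fun k => (hψ₂ _ (hinvnn k)).2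
  have hdpos : ∀ k, 0 < d k := by
    intro k
    rcases eq_or_lt_of_le (hd0 k) with h | h
    · exfalso
      have := hχd k
      rw [← h, zero_mul] at this
      exact (inv_pos.2 (h2k k)).ne this
    · exact h
  have hdanti : ∀ j k : ℕ, j ≤ k → d k ≤ d j := by
    intro j k hjk
    exact hψmono _ _ (hinvnn k)
      (inv_anti₀ (h2k j) (pow_le_pow_right₀ one_le_two hjk))
  -- k₀
  obtain ⟨k₀, hk₀⟩ : ∃ k : ℕ, (ω 1)⁻¹ < 2 ^ k := pow_unbounded_of_one_lt _ one_lt_two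
  have hω1 : 0 < ω 1 := hωpos 1 one_pos
  have hdle1 : ∀ k, k₀ ≤ k → d k ≤ 1 := by
    intro k hk
    have h1 : ((2:ℝ) ^ k)⁻¹ ≤ ω 1 := by
      rw [inv_le_comm₀ (h2k k) hω1]
      exact le_trans (le_of_lt hk₀) (pow_le_pow_right₀ one_le_two hk)
    calc d k ≤ ψ (ω 1) := hψmono _ _ (hinvnn k) h1
      _ = 1 := by rw [show ω 1 = 1 * ω 1 by ring, hψ₁ 1 zero_le_one]
  -- pointwise key inequality
  have hkey : ∀ (k : ℕ) (x : ℝ), 0 < x → x * ω x ≤ ((2:ℝ) ^ k)⁻¹ →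
      ((2:ℝ) ^ k) ^ (2 - p) * x ^ (p - 1) ≤ x ^ (2 * p - 3) / ω x ^ (2 - p) := by
    intro k x hx hxω
    have hωx := hωpos x hx
    have hωle : ω x ≤ ((2:ℝ) ^ k)⁻¹ / x := by
      rw [le_div_iff₀ hx]; linarith [mul_comm x (ω x)]
    have hquotpos : (0:ℝ) < ((2:ℝ) ^ k)⁻¹ / x := div_pos (inv_pos.2 (h2k k)) hx
    have h1 : ω x ^ (2 - p) ≤ (((2:ℝ) ^ k)⁻¹ / x) ^ (2 - p) :=
      Real.rpow_le_rpow hωx.le hωle h2p.le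
    have hden : (0:ℝ) < (((2:ℝ) ^ k)⁻¹ / x) ^ (2 - p) := Real.rpow_pos_of_pos hquotpos _
    have hnum : (0:ℝ) ≤ x ^ (2 * p - 3) := (Real.rpow_pos_of_pos hx _).le
    have h2 : x ^ (2 * p - 3) / (((2:ℝ) ^ k)⁻¹ / x) ^ (2 - p)
        ≤ x ^ (2 * p - 3) / ω x ^ (2 - p) :=
      div_le_div_of_nonneg_left hnum (Real.rpow_pos_of_pos hωx _) h1
    have hxx : x ^ (2 * p - 3) * x ^ (2 - p) = x ^ (p - 1) := by
      rw [← Real.rpow_add hx]; ring_nf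
    have hsplit : (((2:ℝ) ^ k)⁻¹ / x) ^ (2 - p)
        = (((2:ℝ) ^ k) ^ (2 - p))⁻¹ / x ^ (2 - p) := by
      rw [Real.div_rpow (hinvnn k) hx.le, Real.inv_rpow (h2k k).le]
    have hne1 : ((2:ℝ) ^ k) ^ (2 - p) ≠ 0 := (Real.rpow_pos_of_pos (h2k k) _).ne'
    have hne2 : x ^ (2 - p) ≠ 0 := (Real.rpow_pos_of_pos hx _).ne'
    calc ((2:ℝ) ^ k) ^ (2 - p) * x ^ (p - 1)
        = x ^ (2 * p - 3) / ((((2:ℝ) ^ k) ^ (2 - p))⁻¹ / x ^ (2 - p)) := by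
          rw [← hxx]; field_simp
      _ = x ^ (2 * p - 3) / (((2:ℝ) ^ k)⁻¹ / x) ^ (2 - p) := by rw [hsplit]
      _ ≤ _ := h2
  -- lintegral of C * x^(p-1) over Ioc a b
  have hcomp : ∀ (C a b : ℝ), 0 ≤ C → 0 ≤ a → a ≤ b →
      (∫⁻ x in Ioc a b, ENNReal.ofReal (C * x ^ (p - 1)))
        = ENNReal.ofReal (C * (b ^ p - a ^ p) / p) := by
    intro C a b hC ha hab
    have hii : IntervalIntegrable (fun x : ℝ => C * x ^ (p - 1)) volume a b :=
      (intervalIntegral.intervalIntegrable_rpow' (by linarith)).const_mul C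
    have hInt : IntegrableOn (fun x : ℝ => C * x ^ (p - 1)) (Ioc a b) volume :=
      (intervalIntegrable_iff_integrableOn_Ioc_of_le hab).1 hii
    have hnn : 0 ≤ᶠ[ae (volume.restrict (Ioc a b))] fun x : ℝ => C * x ^ (p - 1) := by
      refine (ae_restrict_iff' measurableSet_Ioc).2 ?_
      filter_upwards with x hx
      exact mul_nonneg hC (Real.rpow_nonneg (ha.trans hx.1.le) _)
    rw [← ofReal_integral_eq_lintegral_ofReal hInt hnn]
    congr 1
    rw [← intervalIntegral.integral_of_le hab, intervalIntegral.integral_const_mul,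
      integral_rpow (Or.inl (by linarith))]
    have hpe : p - 1 + 1 = p := by ring
    rw [hpe]; ring
  -- lower bound for the hypothesis integral over Ioc a (d k)
  have hlow : ∀ (k : ℕ) (a : ℝ), 0 ≤ a → a ≤ d k →
      ENNReal.ofReal (((2:ℝ) ^ k) ^ (2 - p) * (d k ^ p - a ^ p) / p)
        ≤ ∫⁻ x in Ioc a (d k), ENNReal.ofReal (x ^ (2 * p - 3) / ω x ^ (2 - p)) := by
    intro k a ha hadk
    have hC : (0:ℝ) ≤ ((2:ℝ) ^ k) ^ (2 - p) := (Real.rpow_pos_of_pos (h2k k) _).le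
    rw [show ((2:ℝ) ^ k) ^ (2 - p) * (d k ^ p - a ^ p) / p
        = ((2:ℝ) ^ k) ^ (2 - p) * (d k ^ p - a ^ p) / p from rfl,
      ← hcomp (((2:ℝ) ^ k) ^ (2 - p)) a (d k) hC ha hadk]
    apply lintegral_mono_ae
    refine (ae_restrict_iff' measurableSet_Ioc).2 ?_
    filter_upwards with x hx
    apply ENNReal.ofReal_le_ofReal
    have hx0 : 0 < x := ha.trans_lt hx.1
    have hxω : x * ω x ≤ ((2:ℝ) ^ k)⁻¹ := by
      rw [← hχd k]; exact hχ x (d k) hx0.le hx.2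
    exact hkey k x hx0 hxω
  -- notation
  set Q2 : ℕ → ℝ := fun k => ((2:ℝ) ^ k) ^ (2 - p) with hQ2_def
  have hQ2pos : ∀ k, 0 < Q2 k := fun k => Real.rpow_pos_of_pos (h2k k) _
  set Qv : ℝ := (2:ℝ) ^ ((2:ℝ) - p) with hQv_def
  have hQv1 : 1 < Qv := by
    rw [hQv_def]
    exact (Real.one_lt_rpow_iff_of_pos two_pos).2 (Or.inl ⟨one_lt_two, h2p⟩)
  have hQ2succ : ∀ k : ℕ, Q2 (k + 1) = Qv * Q2 k := by
    intro k
    rw [hQ2_def, hQv_def]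
    simp only
    rw [pow_succ, Real.mul_rpow (h2k k).le two_pos.le]
    ring
  set K : ℝ := Qv / (Qv - 1) with hK_def
  set L : ℝ := 1 / (Qv - 1) with hL_def
  have hQne : Qv - 1 ≠ 0 := ne_of_gt (by linarith)
  have hKpos : 0 < K := div_pos (by linarith) (by linarith)
  have hLpos : 0 < L := div_pos one_pos (by linarith)
  have hKL1 : K - L = 1 := by
    rw [hK_def, hL_def]
    field_simp
  have hLK : L ≤ K := by linarith
  have habelkey : ∀ x y : ℝ, K * (x - y) + L * (Qv * y) = L * x + x := by
    intro x y
    rw [hK_def, hL_def]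
    field_simp
    ring
  -- Abel summation bound
  have habel : ∀ M : ℕ,
      (∑ j ∈ Finset.Ico k₀ (k₀ + M), Q2 j * d j ^ p)
        ≤ K * (∑ i ∈ Finset.Ico k₀ (k₀ + M), Q2 i * (d i ^ p - d (i + 1) ^ p))
          + L * (Q2 (k₀ + M) * d (k₀ + M) ^ p) := by
    intro M
    induction M with
    | zero =>
        simp only [Nat.add_zero, Finset.Ico_self, Finset.sum_empty, mul_zero, zero_add]
        exact mul_nonneg hLpos.le (mul_nonneg (hQ2pos _).le (Real.rpow_nonneg (hd0 _) _))
    | succ M ih =>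
        rw [show k₀ + (M + 1) = (k₀ + M) + 1 from rfl,
          Finset.sum_Ico_succ_top (Nat.le_add_right k₀ M),
          Finset.sum_Ico_succ_top (Nat.le_add_right k₀ M), hQ2succ (k₀ + M)]
        have hk2 := habelkey (Q2 (k₀ + M) * d (k₀ + M) ^ p) (Q2 (k₀ + M) * d (k₀ + M + 1) ^ p)
        have e1 : Q2 (k₀ + M) * (d (k₀ + M) ^ p - d (k₀ + M + 1) ^ p)
            = Q2 (k₀ + M) * d (k₀ + M) ^ p - Q2 (k₀ + M) * d (k₀ + M + 1) ^ p := by ring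
        nlinarith [ih]
  -- hypothesis integral
  set Hv : ℝ≥0∞ := ∫⁻ δ in Set.Ioc (0:ℝ) 1,
      ENNReal.ofReal (δ ^ (2 * p - 3) / ω δ ^ (2 - p)) with hHv_def
  set T : ℕ → ℝ≥0∞ := fun k =>
      ∫⁻ x in Ioc (0:ℝ) (d k), ENNReal.ofReal (x ^ (2 * p - 3) / ω x ^ (2 - p)) with hT_def
  set G : ℕ → ℝ≥0∞ := fun i =>
      ∫⁻ x in Ioc (d (i + 1)) (d i), ENNReal.ofReal (x ^ (2 * p - 3) / ω x ^ (2 - p)) with hG_def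
  have hTG : ∀ k : ℕ, T k = T (k + 1) + G k := by
    intro k
    rw [hT_def, hG_def]
    simp only
    rw [← lintegral_union measurableSet_Ioc (Set.Ioc_disjoint_Ioc_of_le le_rfl),
      Set.Ioc_union_Ioc_eq_Ioc (hd0 (k + 1)) (hdanti k (k + 1) (Nat.le_succ k))]
  have hTsplit : ∀ M : ℕ, T k₀ = T (k₀ + M) + ∑ i ∈ Finset.range M, G (k₀ + i) := by
    intro M
    induction M with
    | zero => simp
    | succ M ih =>
        rw [ih, hTG (k₀ + M), Finset.sum_range_succ,
          show k₀ + (M + 1) = (k₀ + M) + 1 from rfl]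
        ring
  have hTH : T k₀ ≤ Hv := lintegral_mono_set (Set.Ioc_subset_Ioc_right (hdle1 k₀ le_rfl))
  have hGlow : ∀ i : ℕ,
      ENNReal.ofReal (Q2 i * (d i ^ p - d (i + 1) ^ p)) ≤ ENNReal.ofReal p * G i := by
    intro i
    have h1 := hlow i (d (i + 1)) (hd0 _) (hdanti i (i + 1) (Nat.le_succ i))
    calc ENNReal.ofReal (Q2 i * (d i ^ p - d (i + 1) ^ p))
        = ENNReal.ofReal p * ENNReal.ofReal (Q2 i * (d i ^ p - d (i + 1) ^ p) / p) := by
          rw [← ENNReal.ofReal_mul hp0.le]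
          congr 1
          field_simp
      _ ≤ ENNReal.ofReal p * G i := mul_le_mul_right h1 _
  have hTlow : ∀ k : ℕ,
      ENNReal.ofReal (Q2 k * d k ^ p) ≤ ENNReal.ofReal p * T k := by
    intro k
    have h1 := hlow k 0 le_rfl (hd0 k)
    rw [Real.zero_rpow hpne] at h1
    calc ENNReal.ofReal (Q2 k * d k ^ p)
        = ENNReal.ofReal p * ENNReal.ofReal (Q2 k * (d k ^ p - 0) / p) := by
          rw [← ENNReal.ofReal_mul hp0.le]
          congr 1
          field_simp
          rw [sub_zero]
      _ ≤ ENNReal.ofReal p * T k := mul_le_mul_right h1 _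
  have hpart : ∀ M : ℕ,
      (∑ j ∈ Finset.Ico k₀ (k₀ + M), ENNReal.ofReal (Q2 j * d j ^ p))
        ≤ ENNReal.ofReal (K * p) * Hv := by
    intro M
    have hsum_nonneg : ∀ j ∈ Finset.Ico k₀ (k₀ + M), (0:ℝ) ≤ Q2 j * d j ^ p :=
      fun j _ => mul_nonneg (hQ2pos j).le (Real.rpow_nonneg (hd0 j) p)
    have hcnn : ∀ i : ℕ, (0:ℝ) ≤ Q2 i * (d i ^ p - d (i + 1) ^ p) := by
      intro i
      have : d (i + 1) ^ p ≤ d i ^ p :=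
        Real.rpow_le_rpow (hd0 _) (hdanti i (i + 1) (Nat.le_succ i)) hp0.le
      exact mul_nonneg (hQ2pos i).le (by linarith)
    have hB : ENNReal.ofReal (∑ i ∈ Finset.Ico k₀ (k₀ + M), Q2 i * (d i ^ p - d (i + 1) ^ p))
        ≤ ENNReal.ofReal p * ∑ i ∈ Finset.Ico k₀ (k₀ + M), G i := by
      rw [ENNReal.ofReal_sum_of_nonneg (fun i _ => hcnn i), Finset.mul_sum]
      exact Finset.sum_le_sum fun i _ => hGlow i
    calc (∑ j ∈ Finset.Ico k₀ (k₀ + M), ENNReal.ofReal (Q2 j * d j ^ p))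
        = ENNReal.ofReal (∑ j ∈ Finset.Ico k₀ (k₀ + M), Q2 j * d j ^ p) :=
          (ENNReal.ofReal_sum_of_nonneg hsum_nonneg).symm
      _ ≤ ENNReal.ofReal
            (K * (∑ i ∈ Finset.Ico k₀ (k₀ + M), Q2 i * (d i ^ p - d (i + 1) ^ p))
              + L * (Q2 (k₀ + M) * d (k₀ + M) ^ p)) := ENNReal.ofReal_le_ofReal (habel M)
      _ ≤ ENNReal.ofReal
            (K * (∑ i ∈ Finset.Ico k₀ (k₀ + M), Q2 i * (d i ^ p - d (i + 1) ^ p)))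
          + ENNReal.ofReal (L * (Q2 (k₀ + M) * d (k₀ + M) ^ p)) := ENNReal.ofReal_add_le
      _ = ENNReal.ofReal K *
            ENNReal.ofReal (∑ i ∈ Finset.Ico k₀ (k₀ + M), Q2 i * (d i ^ p - d (i + 1) ^ p))
          + ENNReal.ofReal L * ENNReal.ofReal (Q2 (k₀ + M) * d (k₀ + M) ^ p) := by
          rw [ENNReal.ofReal_mul hKpos.le, ENNReal.ofReal_mul hLpos.le]
      _ ≤ ENNReal.ofReal K * (ENNReal.ofReal p * ∑ i ∈ Finset.Ico k₀ (k₀ + M), G i)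
          + ENNReal.ofReal K * (ENNReal.ofReal p * T (k₀ + M)) := by
          refine add_le_add (mul_le_mul_right hB _) ?_
          exact mul_le_mul' (ENNReal.ofReal_le_ofReal hLK) (hTlow (k₀ + M))
      _ = ENNReal.ofReal K * ENNReal.ofReal p *
            (T (k₀ + M) + ∑ i ∈ Finset.range M, G (k₀ + i)) := by
          have hIcoRange : (∑ i ∈ Finset.Ico k₀ (k₀ + M), G i)
              = ∑ i ∈ Finset.range M, G (k₀ + i) := by
            rw [Finset.sum_Ico_eq_sum_range]
            simp only [Nat.add_sub_cancel_left]
          rw [hIcoRange]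
          ring
      _ = ENNReal.ofReal (K * p) * T k₀ := by
          rw [← hTsplit M, ← ENNReal.ofReal_mul hKpos.le]
      _ ≤ ENNReal.ofReal (K * p) * Hv := mul_le_mul_right hTH _
  have hU : (∑' j : ℕ, ENNReal.ofReal (Q2 j * d j ^ p)) < ⊤ := by
    rw [← Summable.sum_add_tsum_nat_add' (f := fun j => ENNReal.ofReal (Q2 j * d j ^ p)) (k := k₀) ENNReal.summable]
    refine ENNReal.add_lt_top.2 ⟨ENNReal.sum_lt_top.2 fun _ _ => ENNReal.ofReal_lt_top, ?_⟩
    have hb : (∑' i : ℕ, ENNReal.ofReal (Q2 (i + k₀) * d (i + k₀) ^ p))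
        ≤ ENNReal.ofReal (K * p) * Hv := by
      rw [ENNReal.tsum_eq_iSup_nat]
      refine iSup_le fun M => ?_
      have he : (∑ a ∈ Finset.range M, ENNReal.ofReal (Q2 (a + k₀) * d (a + k₀) ^ p))
          = ∑ j ∈ Finset.Ico k₀ (k₀ + M), ENNReal.ofReal (Q2 j * d j ^ p) := by
        rw [Finset.sum_Ico_eq_sum_range]
        simp only [Nat.add_sub_cancel_left]
        exact Finset.sum_congr rfl fun i _ => by rw [add_comm]
      rw [he]
      exact hpart M
    exact lt_of_le_of_lt hb (ENNReal.mul_lt_top ENNReal.ofReal_lt_top hint)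
  -- Stage B
  set rv : ℝ := (2:ℝ) ^ ((1:ℝ) - p) with hrv_def
  have hrvnn : 0 ≤ rv := (Real.rpow_pos_of_pos two_pos _).le
  have hrv1 : rv < 1 := by
    rw [hrv_def]
    exact Real.rpow_lt_one_of_one_lt_of_neg one_lt_two (by linarith)
  set f : ℝ → ℝ := fun τ => ψ (1 / τ) ^ p with hf_def
  have hfnn : ∀ τ : ℝ, 0 < τ → 0 ≤ f τ := fun τ hτ =>
    Real.rpow_nonneg (hψ₂ _ (by positivity)).1 _
  have hfanti : AntitoneOn f (Ici 1) := by
    intro a ha b hb hab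
    have ha0 : (0:ℝ) < a := lt_of_lt_of_le one_pos ha
    have hb0 : (0:ℝ) < b := lt_of_lt_of_le one_pos hb
    have h1 : 1 / b ≤ 1 / a := one_div_le_one_div_of_le ha0 hab
    exact Real.rpow_le_rpow (hψ₂ _ (one_div_nonneg.2 hb0.le)).1
      (hψmono _ _ (one_div_nonneg.2 hb0.le) h1) hp0.le
  have hfint : ∀ a b : ℝ, 1 ≤ a → a ≤ b → IntervalIntegrable f volume a b := by
    intro a b ha hab
    refine (hfanti.mono ?_).intervalIntegrable
    rw [uIcc_of_le hab]
    exact Icc_subset_Ici_self.trans (Ici_subset_Ici.2 ha)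
  have hone_le_pow : ∀ k : ℕ, (1:ℝ) ≤ 2 ^ k := fun k => one_le_pow₀ one_le_two
  set S : ℕ → ℝ := fun k => ∑ j ∈ Finset.range (k + 1), (2:ℝ) ^ j * d j ^ p with hS_def
  have hSnn : ∀ k, 0 ≤ S k := fun k => Finset.sum_nonneg fun j _ =>
    mul_nonneg (h2k j).le (Real.rpow_nonneg (hd0 j) _)
  -- Θ bound on dyadic blocks
  have hΘb : ∀ (k : ℕ) (l : ℝ), (2:ℝ) ^ k ≤ l → l ≤ 2 ^ (k + 1) →
      Θ l ^ p / l ^ p ≤ ((2:ℝ) ^ k) ^ (-p) * S k := by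
    intro k l hlk hlk2
    have h1l : (1:ℝ) ≤ l := (hone_le_pow k).trans hlk
    have hX0 : 0 ≤ ∫ τ in (1:ℝ)..l, f τ :=
      intervalIntegral.integral_nonneg h1l fun u hu => hfnn u (lt_of_lt_of_le one_pos hu.1)
    have hTheta : Θ l ^ p = ∫ τ in (1:ℝ)..l, f τ := by
      rw [hΘ l, one_div, Real.rpow_inv_rpow hX0 hpne]
    have hm1 : (∫ τ in (1:ℝ)..l, f τ) ≤ ∫ τ in (1:ℝ)..((2:ℝ) ^ (k + 1)), f τ := by
      refine intervalIntegral.integral_mono_interval le_rfl h1l hlk2 ?_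
        (hfint 1 _ le_rfl (hone_le_pow (k + 1)))
      refine (ae_restrict_iff' measurableSet_Ioc).2 ?_
      filter_upwards with x hx
      exact hfnn x (lt_trans one_pos hx.1)
    have hadj : (∑ j ∈ Finset.range (k + 1), ∫ x in ((2:ℝ) ^ j)..((2:ℝ) ^ (j + 1)), f x)
        = ∫ x in ((2:ℝ) ^ 0)..((2:ℝ) ^ (k + 1)), f x :=
      intervalIntegral.sum_integral_adjacent_intervals fun j _ =>
        hfint _ _ (hone_le_pow j) (pow_le_pow_right₀ one_le_two (Nat.le_succ j))
    have hpiece : ∀ j : ℕ, (∫ x in ((2:ℝ) ^ j)..((2:ℝ) ^ (j + 1)), f x)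
        ≤ (2:ℝ) ^ j * d j ^ p := by
      intro j
      have hjj : (2:ℝ) ^ j ≤ 2 ^ (j + 1) := pow_le_pow_right₀ one_le_two (Nat.le_succ j)
      have hb : ∀ x ∈ Icc ((2:ℝ) ^ j) ((2:ℝ) ^ (j + 1)), f x ≤ d j ^ p := by
        intro x hx
        have hx0 : (0:ℝ) < x := lt_of_lt_of_le (h2k j) hx.1
        have hxd : ψ (1 / x) ≤ d j := by
          rw [hd_def]
          simp only
          refine hψmono _ _ (by positivity) ?_
          rw [one_div]
          exact inv_anti₀ (h2k j) hx.1
        exact Real.rpow_le_rpow (hψ₂ _ (by positivity)).1 hxd hp0.le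
      calc (∫ x in ((2:ℝ) ^ j)..((2:ℝ) ^ (j + 1)), f x)
          ≤ ∫ _x in ((2:ℝ) ^ j)..((2:ℝ) ^ (j + 1)), d j ^ p :=
            intervalIntegral.integral_mono_on hjj (hfint _ _ (hone_le_pow j) hjj)
              intervalIntegrable_const hb
        _ = ((2:ℝ) ^ (j + 1) - 2 ^ j) * d j ^ p := by
            rw [intervalIntegral.integral_const, smul_eq_mul]
        _ = (2:ℝ) ^ j * d j ^ p := by rw [pow_succ]; ring
    have hSb : (∫ τ in (1:ℝ)..l, f τ) ≤ S k := by
      calc (∫ τ in (1:ℝ)..l, f τ) ≤ ∫ x in ((2:ℝ) ^ 0)..((2:ℝ) ^ (k + 1)), f x := by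
            rw [pow_zero]
            exact hm1
        _ = ∑ j ∈ Finset.range (k + 1), ∫ x in ((2:ℝ) ^ j)..((2:ℝ) ^ (j + 1)), f x := hadj.symm
        _ ≤ S k := Finset.sum_le_sum fun j _ => hpiece j
    have hlp : ((2:ℝ) ^ k) ^ p ≤ l ^ p := Real.rpow_le_rpow (h2k k).le hlk hp0.le
    calc Θ l ^ p / l ^ p ≤ S k / ((2:ℝ) ^ k) ^ p := by
          rw [hTheta]
          exact div_le_div₀ (hSnn k) hSb (Real.rpow_pos_of_pos (h2k k) p) hlp
      _ = ((2:ℝ) ^ k) ^ (-p) * S k := by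
          rw [Real.rpow_neg (h2k k).le, div_eq_mul_inv, mul_comm]
  -- exponent identity
  have hexp : ∀ j k : ℕ, j ≤ k →
      ((2:ℝ) ^ k) ^ (-p) * ((2:ℝ) ^ j * d j ^ p) * (2:ℝ) ^ k
        = rv ^ (k - j) * (Q2 j * d j ^ p) := by
    intro j k hjk
    have h2 : (0:ℝ) ≤ 2 := two_pos.le
    have e1 : ((2:ℝ) ^ k) ^ (-p) = (2:ℝ) ^ ((k:ℝ) * (-p)) := by
      rw [← Real.rpow_natCast 2 k, ← Real.rpow_mul h2]
    have e4 : rv ^ (k - j) = (2:ℝ) ^ (((1:ℝ) - p) * ((k:ℝ) - (j:ℝ))) := by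
      rw [hrv_def, ← Real.rpow_natCast ((2:ℝ) ^ ((1:ℝ) - p)) (k - j), ← Real.rpow_mul h2]
      congr 1
      rw [Nat.cast_sub hjk]
    have e5 : Q2 j = (2:ℝ) ^ ((j:ℝ) * (2 - p)) := by
      rw [hQ2_def]
      simp only
      rw [← Real.rpow_natCast 2 j, ← Real.rpow_mul h2]
    have e2 : ((2:ℝ) ^ k : ℝ) = (2:ℝ) ^ (k:ℝ) := (Real.rpow_natCast 2 k).symm
    have e3 : ((2:ℝ) ^ j : ℝ) = (2:ℝ) ^ (j:ℝ) := (Real.rpow_natCast 2 j).symm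
    rw [e1, e4, e5, e2, e3]
    rw [show (2:ℝ) ^ ((k:ℝ) * (-p)) * ((2:ℝ) ^ (j:ℝ) * d j ^ p) * (2:ℝ) ^ (k:ℝ)
        = (2:ℝ) ^ ((k:ℝ) * (-p)) * (2:ℝ) ^ (j:ℝ) * (2:ℝ) ^ (k:ℝ) * d j ^ p from by ring,
      show (2:ℝ) ^ (((1:ℝ) - p) * ((k:ℝ) - (j:ℝ))) * ((2:ℝ) ^ ((j:ℝ) * (2 - p)) * d j ^ p)
        = (2:ℝ) ^ (((1:ℝ) - p) * ((k:ℝ) - (j:ℝ))) * (2:ℝ) ^ ((j:ℝ) * (2 - p)) * d j ^ p from by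
          ring,
      ← Real.rpow_add two_pos, ← Real.rpow_add two_pos, ← Real.rpow_add two_pos]
    congr 2
    ring
  -- the double series
  set g : ℕ → ℕ → ℝ≥0∞ := fun j k =>
    if j ≤ k then ENNReal.ofReal rv ^ (k - j) * ENNReal.ofReal (Q2 j * d j ^ p) else 0
    with hg_def
  have hpieceB : ∀ k : ℕ,
      (∫⁻ l in Icc ((2:ℝ) ^ k) ((2:ℝ) ^ (k + 1)), ENNReal.ofReal (Θ l ^ p / l ^ p))
        ≤ ∑' j : ℕ, g j k := by
    intro k
    have h1 : (∫⁻ l in Icc ((2:ℝ) ^ k) ((2:ℝ) ^ (k + 1)), ENNReal.ofReal (Θ l ^ p / l ^ p))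
        ≤ ∫⁻ _l in Icc ((2:ℝ) ^ k) ((2:ℝ) ^ (k + 1)),
            ENNReal.ofReal (((2:ℝ) ^ k) ^ (-p) * S k) := by
      apply lintegral_mono_ae
      refine (ae_restrict_iff' measurableSet_Icc).2 ?_
      filter_upwards with l hl
      exact ENNReal.ofReal_le_ofReal (hΘb k l hl.1 hl.2)
    rw [setLIntegral_const, Real.volume_Icc] at h1
    have h2 : ENNReal.ofReal (((2:ℝ) ^ k) ^ (-p) * S k) * ENNReal.ofReal ((2:ℝ) ^ (k + 1) - 2 ^ k)
        = ENNReal.ofReal (((2:ℝ) ^ k) ^ (-p) * S k * (2:ℝ) ^ k) := by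
      rw [← ENNReal.ofReal_mul (mul_nonneg (Real.rpow_nonneg (h2k k).le _) (hSnn k))]
      congr 1
      rw [pow_succ]
      ring
    have h3 : ((2:ℝ) ^ k) ^ (-p) * S k * (2:ℝ) ^ k
        = ∑ j ∈ Finset.range (k + 1), rv ^ (k - j) * (Q2 j * d j ^ p) := by
      calc ((2:ℝ) ^ k) ^ (-p) * S k * (2:ℝ) ^ k
          = ∑ j ∈ Finset.range (k + 1), ((2:ℝ) ^ k) ^ (-p) * ((2:ℝ) ^ j * d j ^ p) * (2:ℝ) ^ k
            := by rw [hS_def]; simp only; rw [Finset.mul_sum, Finset.sum_mul]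
        _ = ∑ j ∈ Finset.range (k + 1), rv ^ (k - j) * (Q2 j * d j ^ p) :=
            Finset.sum_congr rfl fun j hj => hexp j k (Nat.lt_succ_iff.1 (Finset.mem_range.1 hj))
    have h4 : ENNReal.ofReal (∑ j ∈ Finset.range (k + 1), rv ^ (k - j) * (Q2 j * d j ^ p))
        = ∑ j ∈ Finset.range (k + 1), g j k := by
      rw [ENNReal.ofReal_sum_of_nonneg (fun j _ => mul_nonneg (pow_nonneg hrvnn _)
        (mul_nonneg (hQ2pos j).le (Real.rpow_nonneg (hd0 j) _)))]
      refine Finset.sum_congr rfl fun j hj => ?_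
      rw [hg_def]
      simp only
      rw [if_pos (Nat.lt_succ_iff.1 (Finset.mem_range.1 hj)),
        ENNReal.ofReal_mul (pow_nonneg hrvnn _), ENNReal.ofReal_pow hrvnn]
    calc (∫⁻ l in Icc ((2:ℝ) ^ k) ((2:ℝ) ^ (k + 1)), ENNReal.ofReal (Θ l ^ p / l ^ p))
        ≤ ENNReal.ofReal (((2:ℝ) ^ k) ^ (-p) * S k)
            * ENNReal.ofReal ((2:ℝ) ^ (k + 1) - 2 ^ k) := h1
      _ = ∑ j ∈ Finset.range (k + 1), g j k := by rw [h2, h3, h4]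
      _ ≤ ∑' j : ℕ, g j k := ENNReal.sum_le_tsum _
  have hinner : ∀ j : ℕ, (∑' k : ℕ, g j k)
      = (1 - ENNReal.ofReal rv)⁻¹ * ENNReal.ofReal (Q2 j * d j ^ p) := by
    intro j
    rw [← Summable.sum_add_tsum_nat_add' (f := fun k => g j k) (k := j) ENNReal.summable]
    have hz : (∑ k ∈ Finset.range j, g j k) = 0 :=
      Finset.sum_eq_zero fun k hk => by
        rw [hg_def]
        simp only
        rw [if_neg (Nat.not_le.2 (Finset.mem_range.1 hk))]
    rw [hz, zero_add]
    have he : ∀ m : ℕ, g j (m + j) = ENNReal.ofReal rv ^ m * ENNReal.ofReal (Q2 j * d j ^ p) := by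
      intro m
      rw [hg_def]
      simp only
      rw [if_pos (Nat.le_add_left j m), Nat.add_sub_cancel]
    rw [tsum_congr he, ENNReal.tsum_mul_right, ENNReal.tsum_geometric]
  have hcover : Ici (1:ℝ) ⊆ ⋃ k : ℕ, Icc ((2:ℝ) ^ k) ((2:ℝ) ^ (k + 1)) := by
    intro l hl
    have hl1 : (1:ℝ) ≤ l := hl
    obtain ⟨n, hn⟩ := pow_unbounded_of_one_lt l (one_lt_two : (1:ℝ) < 2)
    have hP : ∃ m : ℕ, l < 2 ^ (m + 1) :=
      ⟨n, lt_of_lt_of_le hn (pow_le_pow_right₀ one_le_two (Nat.le_succ n))⟩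
    classical
    have hk2 : l < 2 ^ (Nat.find hP + 1) := Nat.find_spec hP
    have hk1 : (2:ℝ) ^ (Nat.find hP) ≤ l := by
      rcases Nat.eq_zero_or_pos (Nat.find hP) with hk0 | hkpos
      · rw [hk0]
        simpa using hl1
      · obtain ⟨m, hm⟩ := Nat.exists_eq_succ_of_ne_zero hkpos.ne'
        have hmin := Nat.find_min hP (m := m) (by omega)
        push_neg at hmin
        rw [hm]
        exact hmin
    exact mem_iUnion.2 ⟨Nat.find hP, ⟨hk1, hk2.le⟩⟩
  have hgeo : (1 - ENNReal.ofReal rv)⁻¹ < ⊤ := by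
    rw [ENNReal.inv_lt_top]
    rw [tsub_pos_iff_lt]
    exact ENNReal.ofReal_lt_one.2 hrv1
  calc (∫⁻ l in Ici (1:ℝ), ENNReal.ofReal (Θ l ^ p / l ^ p))
      ≤ ∫⁻ l in ⋃ k : ℕ, Icc ((2:ℝ) ^ k) ((2:ℝ) ^ (k + 1)),
          ENNReal.ofReal (Θ l ^ p / l ^ p) := lintegral_mono_set hcover
    _ ≤ ∑' k : ℕ, ∫⁻ l in Icc ((2:ℝ) ^ k) ((2:ℝ) ^ (k + 1)),
          ENNReal.ofReal (Θ l ^ p / l ^ p) := lintegral_iUnion_le _ _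
    _ ≤ ∑' k : ℕ, ∑' j : ℕ, g j k := ENNReal.tsum_le_tsum hpieceB
    _ = ∑' j : ℕ, ∑' k : ℕ, g j k := ENNReal.tsum_comm
    _ = ∑' j : ℕ, (1 - ENNReal.ofReal rv)⁻¹ * ENNReal.ofReal (Q2 j * d j ^ p) :=
        tsum_congr hinner
    _ = (1 - ENNReal.ofReal rv)⁻¹ * ∑' j : ℕ, ENNReal.ofReal (Q2 j * d j ^ p) :=
        ENNReal.tsum_mul_left
    _ < ⊤ := ENNReal.mul_lt_top hgeo hU
end

section
/- Let $\omega$ be a nondecreasing continuous function on $(0,\infty)$ with $\lim_{\delta\to 0^+}\omega(\delta)/\delta^\varepsilon = \infty$ for every $\varepsilon > 0$. Define $\omega^*(\delta) = \delta/(1+\delta) + \delta \inf_{0 < x \leq \delta} \omega(x)/x$. Then $\omega^*$ is a nondecreasing continuous function on $(0,\infty)$ extending continuously to $\omega^*(0)=0$, satisfies $\omega^*(2\delta) < 2\omega^*(\delta)$ for all $\delta > 0$, satisfies $\omega^*(\delta) = O(\omega(\delta))$ as $\delta \to 0^+$, and $\lim_{\delta\to 0^+}\omega^*(\delta)/\delta^\varepsilon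 = \infty$ for every $\varepsilon > 0$. -/
open MeasureTheory Real Set Filter

/-- regularization of a modulus of continuity that decreases to zero slower
than any power: `ω*(δ) = δ/(1+δ) + δ·inf_{0<x≤δ} ω(x)/x` is a nondecreasing continuous
modulus with `ω*(2δ) < 2ω*(δ)`, `ω* = O(ω)` near `0`, still slower than any power. -/
theorem regularized_modulus (ω : ℝ → ℝ) (hmono : MonotoneOn ω (Set.Ioi 0))
    (hcont : ContinuousOn ω (Set.Ioi 0)) (hωpos : ∀ δ : ℝ, 0 < δ → 0 < ω δ)
    (hω0 : Tendsto ω (nhdsWithin 0 (Set.Ioi 0)) (nhds 0))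
    (hslow : ∀ ε : ℝ, 0 < ε →
      Tendsto (fun δ => ω δ / δ ^ ε) (nhdsWithin 0 (Set.Ioi 0)) atTop)
    (ωs : ℝ → ℝ)
    (hωs : ∀ δ : ℝ, ωs δ = δ / (1 + δ) + δ * sInf ((fun x => ω x / x) '' Set.Ioc 0 δ)) :
    MonotoneOn ωs (Set.Ioi 0) ∧ ContinuousOn ωs (Set.Ioi 0) ∧
    Tendsto ωs (nhdsWithin 0 (Set.Ioi 0)) (nhds 0) ∧
    (∀ δ : ℝ, 0 < δ → ωs (2 * δ) < 2 * ωs δ) ∧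
    (∃ C : ℝ, 0 < C ∧ ∀ᶠ δ in nhdsWithin 0 (Set.Ioi 0), ωs δ ≤ C * ω δ) ∧
    (∀ ε : ℝ, 0 < ε →
      Tendsto (fun δ => ωs δ / δ ^ ε) (nhdsWithin 0 (Set.Ioi 0)) atTop) := by
  set S : ℝ → Set ℝ := fun δ => (fun x => ω x / x) '' Set.Ioc 0 δ with hS
  set I : ℝ → ℝ := fun δ => sInf (S δ) with hI
  have hne : ∀ δ : ℝ, 0 < δ → (S δ).Nonempty := fun δ hδ =>
    ⟨ω δ / δ, ⟨δ, ⟨hδ, le_refl δ⟩, rfl⟩⟩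
  have hlb : ∀ δ : ℝ, ∀ y ∈ S δ, (0:ℝ) ≤ y := by
    rintro δ y ⟨x, ⟨hx0, _⟩, rfl⟩
    exact le_of_lt (div_pos (hωpos x hx0) hx0)
  have hbdd : ∀ δ : ℝ, BddBelow (S δ) := fun δ => ⟨0, fun y hy => hlb δ y hy⟩
  have hI0 : ∀ δ : ℝ, 0 < δ → 0 ≤ I δ := fun δ hδ =>
    le_csInf (hne δ hδ) (hlb δ)
  have hIle : ∀ δ : ℝ, 0 < δ → I δ ≤ ω δ / δ := fun δ hδ =>
    csInf_le (hbdd δ) ⟨δ, ⟨hδ, le_refl δ⟩, rfl⟩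
  have hIanti : ∀ δ₁ δ₂ : ℝ, 0 < δ₁ → δ₁ ≤ δ₂ → I δ₂ ≤ I δ₁ :=
    fun δ₁ δ₂ hδ₁ h12 =>
      csInf_le_csInf (hbdd δ₂) (hne δ₁ hδ₁)
        (Set.image_mono (Set.Ioc_subset_Ioc_right h12))
  have hgle : ∀ δ : ℝ, 0 < δ → δ * I δ ≤ ω δ := by
    intro δ hδ
    have := hIle δ hδ
    rw [le_div_iff₀ hδ] at this
    nlinarith
  -- the key monotonicity of g δ = δ * I δ
  have hg : ∀ δ₁ δ₂ : ℝ, 0 < δ₁ → δ₁ ≤ δ₂ → δ₁ * I δ₁ ≤ δ₂ * I δ₂ := by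
    intro δ₁ δ₂ hδ₁ h12
    have hδ₂ : 0 < δ₂ := lt_of_lt_of_le hδ₁ h12
    have key : δ₁ * I δ₁ / δ₂ ≤ I δ₂ := by
      refine le_csInf (hne δ₂ hδ₂) ?_
      rintro y ⟨x, ⟨hx0, hxδ⟩, rfl⟩
      rcases le_or_gt x δ₁ with hx1 | hx1
      · have h1 : I δ₁ ≤ ω x / x := csInf_le (hbdd δ₁) ⟨x, ⟨hx0, hx1⟩, rfl⟩
        have h2 : δ₁ * I δ₁ / δ₂ ≤ I δ₁ := by
          rw [div_le_iff₀ hδ₂]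
          nlinarith [hI0 δ₁ hδ₁]
        linarith
      · have h1 : ω δ₁ ≤ ω x := hmono hδ₁ (lt_trans hδ₁ hx1) hx1.le
        have h2 : ω δ₁ / δ₂ ≤ ω x / x :=
          div_le_div₀ (le_of_lt (hωpos x hx0)) h1 hx0 hxδ
        have h3 : δ₁ * I δ₁ / δ₂ ≤ ω δ₁ / δ₂ := by
          gcongr
          exact hgle δ₁ hδ₁
        linarith
    rw [div_le_iff₀ hδ₂] at key
    nlinarith
  have hfe : ωs = fun δ => δ / (1 + δ) + δ * I δ := funext hωs
  -- monotonicity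
  have hmono' : MonotoneOn ωs (Set.Ioi 0) := by
    intro a ha b hb hab
    simp only [Set.mem_Ioi] at ha hb
    rw [hωs a, hωs b]
    have h1 : a / (1 + a) ≤ b / (1 + b) := by
      rw [div_le_div_iff₀ (by linarith) (by linarith)]
      nlinarith
    exact add_le_add h1 (hg a b ha hab)
  refine ⟨hmono', ?_, ?_, ?_, ?_, ?_⟩
  -- continuity
  · rw [hfe]
    intro δ₀ hδ₀
    simp only [Set.mem_Ioi] at hδ₀
    apply ContinuousWithinAt.add
    · have hca : ContinuousAt (fun δ : ℝ => δ / (1 + δ)) δ₀ :=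
        ContinuousAt.div continuousAt_id (continuousAt_const.add continuousAt_id)
          (by positivity)
      exact hca.continuousWithinAt
    · -- squeeze for g
      have hLb : Tendsto (fun δ : ℝ => min (δ₀ * I δ₀) (δ / δ₀ * (δ₀ * I δ₀)))
          (nhdsWithin δ₀ (Set.Ioi 0)) (nhds (δ₀ * I δ₀)) := by
        have hc : Continuous (fun δ : ℝ => min (δ₀ * I δ₀) (δ / δ₀ * (δ₀ * I δ₀))) :=
          continuous_const.min ((continuous_id.div_const δ₀).mul continuous_const)
        have h : δ₀ / δ₀ * (δ₀ * I δ₀) = δ₀ * I δ₀ := by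
          rw [div_self (ne_of_gt hδ₀), one_mul]
        have ht := ((hc.continuousAt (x := δ₀)).continuousWithinAt
          (s := Set.Ioi 0)).tendsto
        simpa [h] using ht
      have hUb : Tendsto (fun δ : ℝ => max (δ₀ * I δ₀) (δ / δ₀ * (δ₀ * I δ₀)))
          (nhdsWithin δ₀ (Set.Ioi 0)) (nhds (δ₀ * I δ₀)) := by
        have hc : Continuous (fun δ : ℝ => max (δ₀ * I δ₀) (δ / δ₀ * (δ₀ * I δ₀))) :=
          continuous_const.max ((continuous_id.div_const δ₀).mul continuous_const)
        have h : δ₀ / δ₀ * (δ₀ * I δ₀) = δ₀ * I δ₀ := by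
          rw [div_self (ne_of_gt hδ₀), one_mul]
        have ht := ((hc.continuousAt (x := δ₀)).continuousWithinAt
          (s := Set.Ioi 0)).tendsto
        simpa [h] using ht
      have key : ∀ δ ∈ Set.Ioi (0:ℝ),
          min (δ₀ * I δ₀) (δ / δ₀ * (δ₀ * I δ₀)) ≤ δ * I δ ∧
          δ * I δ ≤ max (δ₀ * I δ₀) (δ / δ₀ * (δ₀ * I δ₀)) := by
        intro δ hδ
        simp only [Set.mem_Ioi] at hδ
        have heq : δ / δ₀ * (δ₀ * I δ₀) = δ * I δ₀ := by
          field_simp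
        rcases le_total δ δ₀ with h | h
        · constructor
          · refine le_trans (min_le_right _ _) ?_
            rw [heq]
            exact mul_le_mul_of_nonneg_left (hIanti δ δ₀ hδ h) hδ.le
          · exact le_trans (hg δ δ₀ hδ h) (le_max_left _ _)
        · constructor
          · exact le_trans (min_le_left _ _) (hg δ₀ δ hδ₀ h)
          · refine le_trans ?_ (le_max_right _ _)
            rw [heq]
            exact mul_le_mul_of_nonneg_left (hIanti δ₀ δ hδ₀ h) hδ.le
      exact tendsto_of_tendsto_of_tendsto_of_le_of_le' hLb hUb
        (eventually_mem_nhdsWithin.mono fun δ hδ => (key δ hδ).1)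
        (eventually_mem_nhdsWithin.mono fun δ hδ => (key δ hδ).2)
  -- tendsto 0
  · have hub : Tendsto (fun δ : ℝ => δ / (1 + δ) + ω δ)
        (nhdsWithin 0 (Set.Ioi 0)) (nhds 0) := by
      have h1 : Tendsto (fun δ : ℝ => δ / (1 + δ)) (nhdsWithin 0 (Set.Ioi 0)) (nhds 0) := by
        have : ContinuousAt (fun δ : ℝ => δ / (1 + δ)) 0 :=
          continuousAt_id.div (continuousAt_const.add continuousAt_id) (by norm_num)
        simpa using this.continuousWithinAt.tendsto
      simpa using h1.add hω0
    refine tendsto_of_tendsto_of_tendsto_of_le_of_le' tendsto_const_nhds hub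
      (eventually_mem_nhdsWithin.mono fun δ hδ => ?_)
      (eventually_mem_nhdsWithin.mono fun δ hδ => ?_)
    · simp only [Set.mem_Ioi] at hδ
      rw [hωs δ]
      have := hI0 δ hδ
      positivity
    · simp only [Set.mem_Ioi] at hδ
      rw [hωs δ]
      exact add_le_add (le_refl _) (hgle δ hδ)
  -- doubling
  · intro δ hδ
    rw [hωs (2*δ), hωs δ]
    have h1 : 2 * δ / (1 + 2 * δ) < 2 * (δ / (1 + δ)) := by
      rw [div_lt_iff₀ (by linarith)]
      have : 2 * (δ / (1 + δ)) * (1 + 2 * δ) = 2 * δ * ((1 + 2*δ)/(1+δ)) := by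
        field_simp <;> ring
      rw [this]
      have h2 : (1:ℝ) < (1 + 2*δ)/(1+δ) := by
        rw [lt_div_iff₀ (by linarith)]; linarith
      nlinarith
    have h2 : 2 * δ * I (2 * δ) ≤ 2 * (δ * I δ) := by
      have := hIanti δ (2*δ) hδ (by linarith)
      nlinarith
    linarith
  -- O(ω)
  · refine ⟨2, by norm_num, ?_⟩
    have h1 : ∀ᶠ δ in nhdsWithin 0 (Set.Ioi 0), 1 ≤ ω δ / δ ^ (1:ℝ) :=
      (hslow 1 one_pos).eventually_ge_atTop 1
    filter_upwards [h1, eventually_mem_nhdsWithin] with δ h hδ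
    simp only [Set.mem_Ioi] at hδ
    rw [Real.rpow_one, one_le_div hδ] at h
    rw [hωs δ]
    have h2 : δ / (1 + δ) ≤ δ := by
      apply div_le_self hδ.le (by linarith)
    have := hgle δ hδ
    linarith
  -- slower than any power
  · intro ε hε
    set ε' : ℝ := min ε 1 / 2 with hε'def
    have hε'pos : 0 < ε' := by positivity
    have hε'le : ε' ≤ ε := by
      have : min ε 1 ≤ ε := min_le_left _ _
      linarith
    have hε'lt1 : ε' < 1 := by
      have : min ε 1 ≤ 1 := min_le_right _ _
      simp only [hε'def]; linarith
    rw [tendsto_atTop]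
    intro K
    set K' : ℝ := max K 0 with hK'def
    have hK'0 : 0 ≤ K' := le_max_right _ _
    have h1 : ∀ᶠ x in nhdsWithin 0 (Set.Ioi 0), K' ≤ ω x / x ^ ε' :=
      (hslow ε' hε'pos).eventually_ge_atTop K'
    rw [eventually_nhdsWithin_iff, Metric.eventually_nhds_iff] at h1
    obtain ⟨δ₀, hδ₀, hδ₀'⟩ := h1
    have hmem : ∀ᶠ δ in nhdsWithin 0 (Set.Ioi 0), δ < min δ₀ 1 ∧ 0 < δ := by
      rw [eventually_nhdsWithin_iff, Metric.eventually_nhds_iff]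
      refine ⟨min δ₀ 1, by positivity, fun y hy hy' => ?_⟩
      simp only [Set.mem_Ioi] at hy'
      rw [Real.dist_eq, sub_zero, abs_of_pos hy'] at hy
      exact ⟨hy, hy'⟩
    filter_upwards [hmem] with δ hδ
    obtain ⟨hδlt, hδpos⟩ := hδ
    have hδ1 : δ ≤ 1 := le_of_lt (lt_of_lt_of_le hδlt (min_le_right _ _))
    have hδδ₀ : δ < δ₀ := lt_of_lt_of_le hδlt (min_le_left _ _)
    -- lower bound on I δ
    have hIlb : K' * δ ^ (ε' - 1) ≤ I δ := by
      refine le_csInf (hne δ hδpos) ?_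
      rintro y ⟨x, ⟨hx0, hxδ⟩, rfl⟩
      have hx' : K' ≤ ω x / x ^ ε' := by
        apply hδ₀' ?_ hx0
        rw [Real.dist_eq, sub_zero, abs_of_pos hx0]
        exact lt_of_le_of_lt hxδ hδδ₀
      have hxp : (0:ℝ) < x ^ ε' := Real.rpow_pos_of_pos hx0 _
      have heq : ω x / x = (ω x / x ^ ε') * x ^ (ε' - 1) := by
        rw [Real.rpow_sub hx0, Real.rpow_one]
        field_simp
      show K' * δ ^ (ε' - 1) ≤ ω x / x
      rw [heq]
      have hexp : δ ^ (ε' - 1) ≤ x ^ (ε' - 1) :=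
        Real.rpow_le_rpow_of_nonpos hx0 hxδ (by linarith)
      have hxe : (0:ℝ) ≤ x ^ (ε' - 1) := (Real.rpow_pos_of_pos hx0 _).le
      calc K' * δ ^ (ε' - 1) ≤ K' * x ^ (ε' - 1) :=
            mul_le_mul_of_nonneg_left hexp hK'0
        _ ≤ (ω x / x ^ ε') * x ^ (ε' - 1) := mul_le_mul_of_nonneg_right hx' hxe
    have hδε : (0:ℝ) < δ ^ ε := Real.rpow_pos_of_pos hδpos _
    have step1 : K' * δ ^ ε' ≤ δ * I δ := by
      have := mul_le_mul_of_nonneg_left hIlb hδpos.le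
      calc K' * δ ^ ε' = δ * (K' * δ ^ (ε' - 1)) := by
            rw [Real.rpow_sub hδpos, Real.rpow_one]
            field_simp
        _ ≤ δ * I δ := this
    have step2 : δ ^ ε ≤ δ ^ ε' := Real.rpow_le_rpow_of_exponent_ge hδpos hδ1 hε'le
    have hωsδ : δ * I δ ≤ ωs δ := by
      rw [hωs δ]
      have : 0 ≤ δ / (1 + δ) := by positivity
      linarith
    calc K ≤ K' := le_max_left _ _
      _ = K' * δ ^ ε' / δ ^ ε' := by
          rw [mul_div_assoc, div_self (ne_of_gt (Real.rpow_pos_of_pos hδpos _)), mul_one]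
      _ ≤ K' * δ ^ ε' / δ ^ ε := by
          gcongr
      _ ≤ ωs δ / δ ^ ε := by
          gcongr
          exact step1.trans hωsδ
end
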